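/- There exist 3-by-3 real symmetric positive definite matrices A and B such that Tr(ABA^2B^2) < 0. In particular, the matrices A = [[1,20,210],[20,402,4240],[210,4240,44903]] and B = [[36501,-3820,190],[-3820,401,-20],[190,-20,1]] are positive definite and satisfy Tr(BABAAB) < 0. -/

import Mathlib

open Matrix

theorem posDefA : (!![(1:ℝ),20,210; 20,402,4240; 210,4240,44903]).PosDef := by
  rw [posDef_iff_dotProduct_mulVec]
  constructor
  · ext i j; fin_cases i <;> fin_cases j <;> rfl
  · intro x hx
    simp only [dotProduct, mulVec, Fin.sum_univ_three, RCLike.re_to_real]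
    simp only [Matrix.cons_val', Matrix.cons_val_zero, Matrix.cons_val_one, Matrix.head_cons,
      Matrix.empty_val', Matrix.cons_val_fin_one, Matrix.head_fin_const, Matrix.cons_val_two,
      Matrix.tail_cons, Pi.star_apply, star_trivial]
    by_contra hle
    push_neg at hle
    norm_num [Matrix.cons_val_zero, Matrix.cons_val_one, Matrix.head_cons,
      Matrix.cons_val_two, Matrix.tail_cons, Matrix.head_fin_const] at hle
    have h2 : x 2 = 0 := by
      have : (x 2) ^ 2 = 0 := le_antisymm (by nlinarith [sq_nonneg (x 0 + 20 * x 1 + 210 * x 2), sq_nonneg (x 1 + 20 * x 2)]) (sq_nonneg _)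
      exact pow_eq_zero_iff (by norm_num) |>.mp this
    norm_num [h2] at hle
    have h1 : x 1 = 0 := by
      have : (x 1) ^ 2 = 0 := le_antisymm (by nlinarith [sq_nonneg (x 0 + 20 * x 1)]) (sq_nonneg _)
      exact pow_eq_zero_iff (by norm_num) |>.mp this
    norm_num [h1] at hle
    have h0 : x 0 = 0 := by
      have : (x 0) ^ 2 = 0 := le_antisymm (by nlinarith) (sq_nonneg _)
      exact pow_eq_zero_iff (by norm_num) |>.mp this
    exact hx (funext fun i => by fin_cases i <;> assumption)

theorem posDefB : (!![(36501:ℝ),-3820,190; -3820,401,-20; 190,-20,1]).PosDef := by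
  rw [posDef_iff_dotProduct_mulVec]
  constructor
  · ext i j; fin_cases i <;> fin_cases j <;> rfl
  · intro x hx
    simp only [dotProduct, mulVec, Fin.sum_univ_three, RCLike.re_to_real]
    simp only [Matrix.cons_val', Matrix.cons_val_zero, Matrix.cons_val_one, Matrix.head_cons,
      Matrix.empty_val', Matrix.cons_val_fin_one, Matrix.head_fin_const, Matrix.cons_val_two,
      Matrix.tail_cons, Pi.star_apply, star_trivial]
    by_contra hle
    push_neg at hle
    norm_num [Matrix.cons_val_zero, Matrix.cons_val_one, Matrix.head_cons,
      Matrix.cons_val_two, Matrix.tail_cons, Matrix.head_fin_const] at hle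
    have h0 : x 0 = 0 := by
      have : (x 0) ^ 2 = 0 := le_antisymm (by nlinarith [sq_nonneg (190 * x 0 - 20 * x 1 + x 2), sq_nonneg (x 1 - 20 * x 0)]) (sq_nonneg _)
      exact pow_eq_zero_iff (by norm_num) |>.mp this
    norm_num [h0] at hle
    have h1 : x 1 = 0 := by
      have : (x 1) ^ 2 = 0 := le_antisymm (by nlinarith [sq_nonneg (x 2 - 20 * x 1)]) (sq_nonneg _)
      exact pow_eq_zero_iff (by norm_num) |>.mp this
    norm_num [h1] at hle
    have h2 : x 2 = 0 := by
      have : (x 2) ^ 2 = 0 := le_antisymm (by nlinarith) (sq_nonneg _)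
      exact pow_eq_zero_iff (by norm_num) |>.mp this
    exact hx (funext fun i => by fin_cases i <;> assumption)

/-- There exist 3-by-3 real symmetric positive definite matrices with
`Tr(A B A² B²) < 0`; in particular the explicit pair below works. -/
theorem exists_posDef_trace_ABAABB_neg :
    ((!![(1:ℝ),20,210; 20,402,4240; 210,4240,44903]).PosDef ∧
     (!![(36501:ℝ),-3820,190; -3820,401,-20; 190,-20,1]).PosDef ∧
     ((!![(36501:ℝ),-3820,190; -3820,401,-20; 190,-20,1]) *
      (!![(1:ℝ),20,210; 20,402,4240; 210,4240,44903]) *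
      (!![(36501:ℝ),-3820,190; -3820,401,-20; 190,-20,1]) *
      (!![(1:ℝ),20,210; 20,402,4240; 210,4240,44903]) *
      (!![(1:ℝ),20,210; 20,402,4240; 210,4240,44903]) *
      (!![(36501:ℝ),-3820,190; -3820,401,-20; 190,-20,1])).trace < 0) ∧
    ∃ A B : Matrix (Fin 3) (Fin 3) ℝ, A.PosDef ∧ B.PosDef ∧
      (A * B * A ^ 2 * B ^ 2).trace < 0 := by
  refine ⟨⟨posDefA, posDefB, ?_⟩, !![(1:ℝ),20,210; 20,402,4240; 210,4240,44903],
    !![(36501:ℝ),-3820,190; -3820,401,-20; 190,-20,1], posDefA, posDefB, ?_⟩ <;>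
  · simp only [pow_two, Matrix.trace, Matrix.diag, Matrix.mul_apply, Fin.sum_univ_three]
    norm_num [Matrix.cons_val_zero, Matrix.cons_val_one, Matrix.head_cons, Matrix.cons_val,
      Matrix.cons_val_two, Matrix.tail_cons]
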